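/- Let A be the space of hermitian n×n matrices in a *-subalgebra 𝒜 ⊆ M_n containing the identity, and let C be the state space of 𝒜 (positive semidefinite trace-one matrices in 𝒜). For any hermitian a ∈ A, the normal cone of C at the exposed face F_C(a) = argmin{⟨ρ,a⟩ : ρ ∈ C} equals {b ∈ A | p_0(a) ⪯ p_0(b)}, where p_0 denotes the ground projection (spectral projection onto the eigenspace of the smallest eigenvalue) and ⪯ is the Löwner order. -/

import Mathlib

open Matrix
open scoped ComplexOrder


section Helpers
open Polynomial
variable {n : ℕ}


private lemma psd_eq_ct_mul_self {ρ : Matrix (Fin n) (Fin n) ℂ} (hρ : ρ.PosSemidef) :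
    ∃ B : Matrix (Fin n) (Fin n) ℂ, ρ = Bᴴ * B := by
  open scoped MatrixOrder Matrix.Norms.L2Operator in
  obtain ⟨B, hB⟩ := CStarAlgebra.nonneg_iff_eq_star_mul_self.mp hρ.nonneg
  exact ⟨B, hB⟩

private lemma trace_conj_self (M : Matrix (Fin n) (Fin n) ℂ) :
    trace (Mᴴ * M) = ((∑ j, ∑ i, Complex.normSq (M i j) : ℝ) : ℂ) := by
  simp only [Matrix.trace, Matrix.diag, Matrix.mul_apply, Matrix.conjTranspose_apply]
  push_cast
  congr 1; funext j; congr 1; funext i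
  rw [Complex.normSq_eq_conj_mul_self, Complex.star_def]

private lemma psd_trace_nonneg {ρ s : Matrix (Fin n) (Fin n) ℂ}
    (hρ : ρ.PosSemidef) (hs : s.PosSemidef) : 0 ≤ (trace (ρ * s)).re := by
  obtain ⟨B, hB⟩ := psd_eq_ct_mul_self hρ
  obtain ⟨C, hC⟩ := psd_eq_ct_mul_self hs
  have key : trace (ρ * s) = trace ((B * Cᴴ)ᴴ * (B * Cᴴ)) := by
    rw [hB, hC, Matrix.conjTranspose_mul, Matrix.conjTranspose_conjTranspose]
    rw [show Bᴴ * B * (Cᴴ * C) = (Bᴴ * B * Cᴴ) * C by noncomm_ring,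
      Matrix.trace_mul_comm]
    noncomm_ring
  rw [key, trace_conj_self]
  simp only [Complex.ofReal_re]
  exact Finset.sum_nonneg fun j _ => Finset.sum_nonneg fun i _ => Complex.normSq_nonneg _

private lemma psd_trace_eq_zero {ρ s : Matrix (Fin n) (Fin n) ℂ}
    (hρ : ρ.PosSemidef) (hs : s.PosSemidef) (h : (trace (ρ * s)).re = 0) : ρ * s = 0 := by
  obtain ⟨B, hB⟩ := psd_eq_ct_mul_self hρ
  obtain ⟨C, hC⟩ := psd_eq_ct_mul_self hs
  have key : trace (ρ * s) = trace ((B * Cᴴ)ᴴ * (B * Cᴴ)) := by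
    rw [hB, hC, Matrix.conjTranspose_mul, Matrix.conjTranspose_conjTranspose]
    rw [show Bᴴ * B * (Cᴴ * C) = (Bᴴ * B * Cᴴ) * C by noncomm_ring,
      Matrix.trace_mul_comm]
    noncomm_ring
  rw [key, trace_conj_self, Complex.ofReal_re] at h
  have hz : B * Cᴴ = 0 := by
    ext i j
    have h1 : ∀ j ∈ Finset.univ (α := Fin n), (0:ℝ) ≤ ∑ i, Complex.normSq ((B * Cᴴ) i j) := by
      intro j _; exact Finset.sum_nonneg fun i _ => Complex.normSq_nonneg _
    have h2 := (Finset.sum_eq_zero_iff_of_nonneg h1).mp h j (Finset.mem_univ j)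
    have h3 : ∀ i ∈ Finset.univ (α := Fin n), (0:ℝ) ≤ Complex.normSq ((B * Cᴴ) i j) := by
      intro i _; exact Complex.normSq_nonneg _
    have h4 := (Finset.sum_eq_zero_iff_of_nonneg h3).mp h2 i (Finset.mem_univ i)
    simpa using Complex.normSq_eq_zero.mp h4
  rw [hB, hC, show Bᴴ * B * (Cᴴ * C) = Bᴴ * (B * Cᴴ) * C by noncomm_ring, hz]
  simp

private lemma real_smul_mat (M : Matrix (Fin n) (Fin n) ℂ) (r : ℝ) : r • M = ((r:ℂ)) • M := by
  ext i j; simp [Complex.real_smul]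

private lemma herm_quad_real {z : Matrix (Fin n) (Fin n) ℂ} (hz : zᴴ = z) (v : Fin n → ℂ) :
    (star v ⬝ᵥ z *ᵥ v).im = 0 := by
  have h : star (star v ⬝ᵥ z *ᵥ v) = star v ⬝ᵥ z *ᵥ v := by
    rw [← Matrix.star_dotProduct, Matrix.star_mulVec, hz, Matrix.dotProduct_mulVec,
      dotProduct_comm]
  exact Complex.conj_eq_iff_im.mp h

-- quadratic form of p*p via w = p *ᵥ v
private lemma quad_idem {p : Matrix (Fin n) (Fin n) ℂ} (hp : pᴴ = p) (v : Fin n → ℂ) :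
    star v ⬝ᵥ (p * p) *ᵥ v = star (p *ᵥ v) ⬝ᵥ (p *ᵥ v) := by
  rw [← Matrix.mulVec_mulVec, Matrix.dotProduct_mulVec, Matrix.star_mulVec, hp]

private lemma psd_smul_real {p : Matrix (Fin n) (Fin n) ℂ} (hp : p.PosSemidef)
    {c : ℝ} (hc : 0 ≤ c) : ((c:ℂ) • p).PosSemidef := by
  rw [Matrix.posSemidef_iff_dotProduct_mulVec]
  constructor
  · unfold Matrix.IsHermitian
    rw [Matrix.conjTranspose_smul, hp.1.eq]
    congr 1
    simp
  · intro x
    rw [Matrix.smul_mulVec, dotProduct_smul]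
    exact mul_nonneg (Complex.zero_le_real.mpr hc) ((Matrix.posSemidef_iff_dotProduct_mulVec.mp hp).2 x)
private lemma star_dot_re (w : Fin n → ℂ) :
    star w ⬝ᵥ w = ((∑ i, Complex.normSq (w i) : ℝ) : ℂ) := by
  simp only [dotProduct, Pi.star_apply]
  push_cast
  congr 1; funext i
  rw [Complex.normSq_eq_conj_mul_self, Complex.star_def]

private lemma quad_le_trace {y : Matrix (Fin n) (Fin n) ℂ} (hy : y.PosSemidef) (w : Fin n → ℂ) :
    (star w ⬝ᵥ y *ᵥ w).re ≤ (trace y).re * (star w ⬝ᵥ w).re := by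
  obtain ⟨C, rfl⟩ := psd_eq_ct_mul_self hy
  have hq : star w ⬝ᵥ (Cᴴ * C) *ᵥ w = star (C *ᵥ w) ⬝ᵥ (C *ᵥ w) := by
    rw [← Matrix.mulVec_mulVec, Matrix.dotProduct_mulVec, Matrix.star_mulVec]
  rw [hq, star_dot_re, trace_conj_self, star_dot_re]
  simp only [Complex.ofReal_re]
  have hbound : ∀ i, Complex.normSq ((C *ᵥ w) i)
      ≤ (∑ j, Complex.normSq (C i j)) * (∑ j, Complex.normSq (w j)) := by
    intro i
    have h1 : ‖(C *ᵥ w) i‖ ≤ ∑ j, ‖C i j‖ * ‖w j‖ := by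
      calc ‖(C *ᵥ w) i‖ = ‖∑ j, C i j * w j‖ := rfl
        _ ≤ ∑ j, ‖C i j * w j‖ := norm_sum_le _ _
        _ = ∑ j, ‖C i j‖ * ‖w j‖ := by simp [norm_mul]
    have h2 : (∑ j, ‖C i j‖ * ‖w j‖) ^ 2
        ≤ (∑ j, ‖C i j‖ ^ 2) * ∑ j, ‖w j‖ ^ 2 :=
      Finset.sum_mul_sq_le_sq_mul_sq _ _ _
    calc Complex.normSq ((C *ᵥ w) i) = ‖(C *ᵥ w) i‖ ^ 2 := by
          rw [← Complex.sq_norm]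
      _ ≤ (∑ j, ‖C i j‖ * ‖w j‖) ^ 2 := by
          apply pow_le_pow_left₀ (norm_nonneg _) h1
      _ ≤ (∑ j, ‖C i j‖ ^ 2) * ∑ j, ‖w j‖ ^ 2 := h2
      _ = (∑ j, Complex.normSq (C i j)) * (∑ j, Complex.normSq (w j)) := by
          congr 1 <;> (refine Finset.sum_congr rfl fun j _ => ?_; rw [← Complex.sq_norm])
  calc ∑ i, Complex.normSq ((C *ᵥ w) i)
      ≤ ∑ i, (∑ j, Complex.normSq (C i j)) * (∑ j, Complex.normSq (w j)) :=
        Finset.sum_le_sum fun i _ => hbound i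
    _ = (∑ i, ∑ j, Complex.normSq (C i j)) * (∑ j, Complex.normSq (w j)) := by
        rw [← Finset.sum_mul]
    _ = (∑ j, ∑ i, Complex.normSq (C i j)) * (∑ j, Complex.normSq (w j)) := by
        rw [Finset.sum_comm]

private lemma aeval_mem (𝒜 : StarSubalgebra ℂ (Matrix (Fin n) (Fin n) ℂ))
    {m : Matrix (Fin n) (Fin n) ℂ} (h : m ∈ 𝒜) (f : Polynomial ℂ) :
    Polynomial.aeval m f ∈ 𝒜 := by
  have key : Polynomial.aeval m f = 𝒜.subtype (Polynomial.aeval (⟨m, h⟩ : 𝒜) f) := by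
    rw [← Polynomial.aeval_algHom_apply]
    rfl
  rw [key]
  exact SetLike.coe_mem _

private lemma ext_mulVec {A B : Matrix (Fin n) (Fin n) ℂ} (h : ∀ v, A *ᵥ v = B *ᵥ v) :
    A = B := by
  ext i j
  have := congrFun (h (Pi.single j 1)) i
  simpa [Matrix.mulVec_single] using this

private lemma mul_fix_columns {p m y : Matrix (Fin n) (Fin n) ℂ} {μ : ℝ}
    (hfix : ∀ v, m *ᵥ v = (μ:ℂ) • v → p *ᵥ v = v) (hy : m * y = (μ:ℂ) • y) : p * y = y := by
  ext i j
  have hcol : m *ᵥ (fun kk => y kk j) = (μ:ℂ) • (fun kk => y kk j) := by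
    funext i'
    have := congrFun (congrFun hy i') j
    simpa [Matrix.mul_apply, Matrix.mulVec, dotProduct] using this
  have := congrFun (hfix _ hcol) i
  simpa [Matrix.mul_apply, Matrix.mulVec, dotProduct] using this

end Helpers

/-- The relative interior of a set in a real vector space, described algebraically:
`x ∈ riSet S` iff `x ∈ S` and every `y ∈ S` can be moved a little past `x` inside `S`.
For convex sets in finite dimension this agrees with the usual relative interior. -/
def riSet {V : Type*} [AddCommGroup V] [Module ℝ V] (S : Set V) : Set V :=
  {x ∈ S | ∀ y ∈ S, ∃ ε : ℝ, 0 < ε ∧ x + ε • (x - y) ∈ S}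

/-- The state space of a *-subalgebra `𝒜 ⊆ Mₙ(ℂ)`: positive semidefinite trace-one
matrices in `𝒜`. -/
def states {n : ℕ} (𝒜 : StarSubalgebra ℂ (Matrix (Fin n) (Fin n) ℂ)) :
    Set (Matrix (Fin n) (Fin n) ℂ) :=
  {ρ | ρ ∈ 𝒜 ∧ ρ.PosSemidef ∧ ρ.trace = 1}

/-- The (real) Hilbert–Schmidt inner product `⟨a,b⟩ = Re tr(a* b)`. -/
noncomputable def hsInner {n : ℕ} (a b : Matrix (Fin n) (Fin n) ℂ) : ℝ :=
  (Matrix.trace (aᴴ * b)).re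

/-- The exposed face `F_C(a) = argmin {⟨ρ,a⟩ : ρ ∈ C}` of the state space of `𝒜`. -/
noncomputable def expFace {n : ℕ} (𝒜 : StarSubalgebra ℂ (Matrix (Fin n) (Fin n) ℂ))
    (a : Matrix (Fin n) (Fin n) ℂ) : Set (Matrix (Fin n) (Fin n) ℂ) :=
  {ρ ∈ states 𝒜 | ∀ σ ∈ states 𝒜, hsInner ρ a ≤ hsInner σ a}

/-- The smallest eigenvalue (ground energy) of a matrix. -/
noncomputable def minEig {n : ℕ} (a : Matrix (Fin n) (Fin n) ℂ) : ℝ :=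
  sInf {c : ℝ | ∃ v : Fin n → ℂ, v ≠ 0 ∧ a.mulVec v = (c : ℂ) • v}


section Ground
open Polynomial
variable {n : ℕ}


private lemma eigSet {m : Matrix (Fin n) (Fin n) ℂ} (hm : m.IsHermitian) :
    {c : ℝ | ∃ v : Fin n → ℂ, v ≠ 0 ∧ m.mulVec v = (c : ℂ) • v} = Set.range hm.eigenvalues := by
  ext c
  constructor
  · rintro ⟨v, hv0, hv⟩
    set U : Matrix (Fin n) (Fin n) ℂ := ↑hm.eigenvectorUnitary with hU
    have h1 : U * star U = 1 := Matrix.mem_unitaryGroup_iff.mp hm.eigenvectorUnitary.2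
    have h2 : star U * U = 1 := Matrix.mem_unitaryGroup_iff'.mp hm.eigenvectorUnitary.2
    have hker : (m - (c:ℂ) • 1) *ᵥ v = 0 := by
      rw [Matrix.sub_mulVec, Matrix.smul_mulVec, Matrix.one_mulVec, hv, sub_self]
    have hdet : (m - (c:ℂ) • 1).det = 0 := Matrix.exists_mulVec_eq_zero_iff.mp ⟨v, hv0, hker⟩
    have hrw : m - (c:ℂ) • 1 = U * diagonal (fun i => ((hm.eigenvalues i : ℂ) - c)) * star U := by
      have hsp : m = U * diagonal (RCLike.ofReal ∘ hm.eigenvalues) * star U := hm.spectral_theorem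
      have hone : (c:ℂ) • (1 : Matrix (Fin n) (Fin n) ℂ) = U * ((c:ℂ) • 1) * star U := by
        rw [Matrix.mul_smul, Matrix.smul_mul, mul_one, h1]
      calc m - (c:ℂ) • 1
          = U * diagonal (RCLike.ofReal ∘ hm.eigenvalues) * star U - U * ((c:ℂ) • 1) * star U := by
            rw [← hsp, ← hone]
        _ = U * (diagonal (RCLike.ofReal ∘ hm.eigenvalues) - (c:ℂ) • 1) * star U := by
            noncomm_ring
        _ = U * diagonal (fun i => ((hm.eigenvalues i : ℂ) - c)) * star U := by
            congr 1; congr 1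
            rw [show ((c:ℂ) • 1 : Matrix (Fin n) (Fin n) ℂ) = diagonal (fun _ => (c:ℂ)) by
              ext i j; by_cases h : i = j <;> simp [Matrix.one_apply, h],
              Matrix.diagonal_sub]
            rfl
    rw [hrw] at hdet
    have hdet2 : (diagonal (fun i => ((hm.eigenvalues i : ℂ) - c))).det = 0 := by
      have := hdet
      rw [Matrix.det_mul, Matrix.det_mul] at this
      have hUdet : U.det * (star U).det = 1 := by rw [← Matrix.det_mul, h1, Matrix.det_one]
      have hX : (diagonal (fun i => ((hm.eigenvalues i : ℂ) - c))).det
          = U.det * (diagonal (fun i => ((hm.eigenvalues i : ℂ) - c))).det * (star U).det := by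
        rw [show U.det * (diagonal (fun i => ((hm.eigenvalues i : ℂ) - c))).det * (star U).det
            = (diagonal (fun i => ((hm.eigenvalues i : ℂ) - c))).det * (U.det * (star U).det)
          by ring, hUdet, mul_one]
      rw [hX]; exact this
    rw [Matrix.det_diagonal] at hdet2
    obtain ⟨i, _, hi⟩ := Finset.prod_eq_zero_iff.mp hdet2
    refine ⟨i, ?_⟩
    have : (hm.eigenvalues i : ℂ) = c := by linear_combination hi
    exact_mod_cast this
  · rintro ⟨i, rfl⟩
    refine ⟨⇑(hm.eigenvectorBasis i), ?_, ?_⟩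
    · intro h0
      exact hm.eigenvectorBasis.orthonormal.ne_zero i (by simpa using h0)
    · rw [hm.mulVec_eigenvectorBasis]
      funext j
      simp [Complex.real_smul]

private lemma minEig_le {m : Matrix (Fin n) (Fin n) ℂ} (hm : m.IsHermitian) (i : Fin n) :
    minEig m ≤ hm.eigenvalues i := by
  rw [minEig, eigSet hm]
  exact csInf_le (Set.finite_range _).bddBelow ⟨i, rfl⟩

private lemma minEig_mem {m : Matrix (Fin n) (Fin n) ℂ} (hn : 0 < n) (hm : m.IsHermitian) :
    ∃ i, minEig m = hm.eigenvalues i := by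
  have : Nonempty (Fin n) := ⟨⟨0, hn⟩⟩
  rw [minEig, eigSet hm]
  have h := (Set.range_nonempty hm.eigenvalues).csInf_mem (Set.finite_range _)
  obtain ⟨i, hi⟩ := h
  exact ⟨i, hi.symm⟩

private lemma aeval_diag' (f : Polynomial ℂ) (d : Fin n → ℂ) :
    aeval (diagonal d) f = diagonal (fun i => f.eval (d i)) := by
  have h := Polynomial.aeval_algHom_apply (Matrix.diagonalAlgHom (n := Fin n) (α := ℂ) ℂ) d f
  rw [Matrix.diagonalAlgHom_apply] at h
  have h2 : (aeval d) f = fun i => f.eval (d i) := by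
    funext i
    rw [Polynomial.aeval_fn_apply, Polynomial.coe_aeval_eq_eval]
  rw [h, Matrix.diagonalAlgHom_apply, h2]

private lemma myconj_pow {U D : Matrix (Fin n) (Fin n) ℂ} (h1 : U * star U = 1)
    (h2 : star U * U = 1) (k : ℕ) : (U * D * star U) ^ k = U * D ^ k * star U := by
  induction k with
  | zero => rw [pow_zero, pow_zero, mul_one, h1]
  | succ k ih =>
      rw [pow_succ, ih, pow_succ]
      calc U * D ^ k * star U * (U * D * star U)
          = U * D ^ k * (star U * U) * D * star U := by noncomm_ring
        _ = U * (D ^ k * D) * star U := by rw [h2]; noncomm_ring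

private lemma aeval_conj {U D : Matrix (Fin n) (Fin n) ℂ} (h1 : U * star U = 1)
    (h2 : star U * U = 1) (f : Polynomial ℂ) :
    aeval (U * D * star U) f = U * (aeval D f) * star U := by
  rw [aeval_eq_sum_range, aeval_eq_sum_range]
  simp_rw [myconj_pow h1 h2, Matrix.mul_sum, Matrix.sum_mul, mul_smul_comm, smul_mul_assoc]

structure GroundData {n : ℕ} (m : Matrix (Fin n) (Fin n) ℂ) where
  p : Matrix (Fin n) (Fin n) ℂ
  f : Polynomial ℂ
  hpoly : p = Polynomial.aeval m f
  herm : pᴴ = p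
  psd : p.PosSemidef
  k : ℝ
  kpos : 0 < k
  htr : p.trace = (k : ℂ)
  hmul : m * p = (minEig m : ℂ) • p
  idem : p * p = p
  hfix : ∀ v, m.mulVec v = (minEig m : ℂ) • v → p.mulVec v = v
  hshift : (m - (minEig m : ℂ) • 1).PosSemidef

lemma mkGroundData (hn : 0 < n) {m : Matrix (Fin n) (Fin n) ℂ}
    (hm : m.IsHermitian) : Nonempty (GroundData m) := by
  set lam := minEig m with hlam
  set U : Matrix (Fin n) (Fin n) ℂ := ↑hm.eigenvectorUnitary with hU
  have h1 : U * star U = 1 := Matrix.mem_unitaryGroup_iff.mp hm.eigenvectorUnitary.2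
  have h2 : star U * U = 1 := Matrix.mem_unitaryGroup_iff'.mp hm.eigenvectorUnitary.2
  set D : Matrix (Fin n) (Fin n) ℂ := diagonal (RCLike.ofReal ∘ hm.eigenvalues) with hD
  have hmeq : m = U * D * star U := hm.spectral_theorem
  set χ : Fin n → ℂ := fun i => if hm.eigenvalues i = lam then 1 else 0 with hχ
  set d : Matrix (Fin n) (Fin n) ℂ := diagonal χ with hd
  set p : Matrix (Fin n) (Fin n) ℂ := U * d * star U with hp
  -- the polynomial
  set s : Finset ℝ := Finset.image hm.eigenvalues Finset.univ with hs
  set g : ℝ → ℝ := fun x => if x = lam then 1 else 0 with hg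
  set P : Polynomial ℝ := Lagrange.interpolate s id g with hP
  set f : Polynomial ℂ := P.map (algebraMap ℝ ℂ) with hf
  have heval : ∀ i, f.eval ((hm.eigenvalues i : ℂ)) = χ i := by
    intro i
    have hnode : P.eval (hm.eigenvalues i) = g (hm.eigenvalues i) := by
      have := Lagrange.eval_interpolate_at_node (v := id) (s := s) (r := g)
        (Set.injOn_id _) (by simp [hs] : hm.eigenvalues i ∈ s)
      exact this
    have : f.eval ((hm.eigenvalues i : ℂ)) = ((P.eval (hm.eigenvalues i) : ℝ) : ℂ) := by
      rw [hf, Polynomial.eval_map]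
      exact Polynomial.eval₂_hom (algebraMap ℝ ℂ) _
    rw [this, hnode, hg, hχ]
    by_cases hcase : hm.eigenvalues i = lam <;> simp [hcase]
  have hpoly : p = Polynomial.aeval m f := by
    have hfun : (fun i => f.eval (((RCLike.ofReal ∘ hm.eigenvalues) i : ℂ))) = χ :=
      funext fun i => heval i
    calc p = U * diagonal (fun i => f.eval (((RCLike.ofReal ∘ hm.eigenvalues) i : ℂ))) * star U := by
          rw [hp, hd, hfun]
      _ = U * (aeval D f) * star U := by rw [aeval_diag']
      _ = aeval (U * D * star U) f := (aeval_conj h1 h2 f).symm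
      _ = aeval m f := by rw [← hmeq]
  have hχstar : ∀ i, star (χ i) = χ i := by
    intro i; rw [hχ]; by_cases hcase : hm.eigenvalues i = lam <;> simp [hcase]
  have herm : pᴴ = p := by
    rw [hp, Matrix.conjTranspose_mul, Matrix.conjTranspose_mul, ← Matrix.star_eq_conjTranspose U,
      Matrix.star_eq_conjTranspose, Matrix.conjTranspose_conjTranspose, hd,
      Matrix.diagonal_conjTranspose]
    have : star χ = χ := funext hχstar
    rw [this, Matrix.mul_assoc]
  have hχnonneg : ∀ i, (0:ℂ) ≤ χ i := by
    intro i; rw [hχ]; by_cases hcase : hm.eigenvalues i = lam <;> simp [hcase]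
  have psd : p.PosSemidef := by
    have := (Matrix.PosSemidef.diagonal hχnonneg (n := Fin n)).mul_mul_conjTranspose_same U
    rw [← Matrix.star_eq_conjTranspose] at this
    exact this
  obtain ⟨i0, hi0⟩ := minEig_mem hn hm
  set k : ℝ := ∑ i, (if hm.eigenvalues i = lam then (1:ℝ) else 0) with hk
  have kpos : 0 < k := by
    rw [hk]
    refine Finset.sum_pos' (fun i _ => by positivity) ⟨i0, Finset.mem_univ i0, ?_⟩
    rw [if_pos hi0.symm]; norm_num
  have htr : p.trace = (k : ℂ) := by
    rw [hp, Matrix.trace_mul_cycle, h2, one_mul, hd, Matrix.trace_diagonal, hk]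
    push_cast
    refine Finset.sum_congr rfl fun i _ => ?_
    rw [hχ]; by_cases hcase : hm.eigenvalues i = lam <;> simp [hcase]
  have diagonal_congr : ∀ (f' g' : Fin n → ℂ), (∀ i, f' i = g' i) →
      diagonal f' = diagonal g' := fun f' g' h => by rw [funext h]
  have hDd : D * d = (lam : ℂ) • d := by
    rw [hD, hd, Matrix.diagonal_mul_diagonal, ← Matrix.diagonal_smul]
    apply diagonal_congr
    intro i
    simp only [Function.comp_apply, Pi.smul_apply, smul_eq_mul, hχ]
    by_cases hcase : hm.eigenvalues i = lam <;> simp [hcase]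
  have hmul : m * p = (lam : ℂ) • p := by
    calc m * p = U * D * (star U * U) * d * star U := by rw [hmeq, hp]; noncomm_ring
      _ = U * (D * d) * star U := by rw [h2]; noncomm_ring
      _ = (lam : ℂ) • (U * d * star U) := by rw [hDd, mul_smul_comm, smul_mul_assoc]
      _ = (lam : ℂ) • p := by rw [← hp]
  have idem : p * p = p := by
    have hdd : d * d = d := by
      rw [hd, Matrix.diagonal_mul_diagonal]
      apply diagonal_congr
      intro i
      simp only [hχ]
      by_cases hcase : hm.eigenvalues i = lam <;> simp [hcase]
    calc p * p = U * d * (star U * U) * d * star U := by rw [hp]; noncomm_ring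
      _ = U * (d * d) * star U := by rw [h2]; noncomm_ring
      _ = p := by rw [hdd, ← hp]
  have hfix : ∀ v, m.mulVec v = (lam : ℂ) • v → p.mulVec v = v := by
    intro v hv
    set w : Fin n → ℂ := star U *ᵥ v with hw
    have hUv : U *ᵥ w = v := by
      rw [hw, Matrix.mulVec_mulVec, h1, Matrix.one_mulVec]
    have hDw : D *ᵥ w = (lam : ℂ) • w := by
      have hinj : ∀ x y : Fin n → ℂ, U *ᵥ x = U *ᵥ y → x = y := by
        intro x y hxy
        have := congrArg (fun z => star U *ᵥ z) hxy
        simpa [Matrix.mulVec_mulVec, h2, Matrix.one_mulVec] using this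
      apply hinj
      have e1 : U *ᵥ (D *ᵥ w) = m *ᵥ v := by
        rw [hw, Matrix.mulVec_mulVec, Matrix.mulVec_mulVec, ← hmeq]
      have e2 : U *ᵥ ((lam : ℂ) • w) = (lam : ℂ) • v := by
        rw [Matrix.mulVec_smul, hUv]
      rw [e1, e2, hv]
    have hww : ∀ i, χ i * w i = w i := by
      intro i
      by_cases hcase : hm.eigenvalues i = lam
      · rw [hχ]; simp [hcase]
      · have hi := congrFun hDw i
        rw [hD] at hi
        rw [Matrix.mulVec_diagonal] at hi
        have : ((hm.eigenvalues i : ℂ) - (lam : ℂ)) * w i = 0 := by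
          rw [sub_mul]
          simp only [Pi.smul_apply, smul_eq_mul] at hi
          rw [show ((RCLike.ofReal ∘ hm.eigenvalues) i : ℂ) = (hm.eigenvalues i : ℂ) from rfl] at hi
          rw [hi]; ring
        have hwi : w i = 0 := by
          rcases mul_eq_zero.mp this with h' | h'
          · exfalso; apply hcase
            have : (hm.eigenvalues i : ℂ) = (lam : ℂ) := by linear_combination h'
            exact_mod_cast this
          · exact h'
        rw [hwi, mul_zero]
    have hdw : d *ᵥ w = w := by
      funext i
      rw [hd, Matrix.mulVec_diagonal, hww i]
    rw [hp, show (U * d * star U) *ᵥ v = U *ᵥ (d *ᵥ (star U *ᵥ v)) by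
      rw [Matrix.mulVec_mulVec, Matrix.mulVec_mulVec], ← hw, hdw, hUv]
  have hshift : (m - (lam : ℂ) • 1).PosSemidef := by
    have hrw : m - (lam:ℂ) • 1 = U * diagonal (fun i => ((hm.eigenvalues i - lam : ℝ) : ℂ)) * star U := by
      have hone : (lam:ℂ) • (1 : Matrix (Fin n) (Fin n) ℂ) = U * ((lam:ℂ) • 1) * star U := by
        rw [Matrix.mul_smul, Matrix.smul_mul, mul_one, h1]
      calc m - (lam:ℂ) • 1
          = U * D * star U - U * ((lam:ℂ) • 1) * star U := by rw [← hmeq, ← hone]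
        _ = U * (D - (lam:ℂ) • 1) * star U := by noncomm_ring
        _ = U * diagonal (fun i => ((hm.eigenvalues i - lam : ℝ) : ℂ)) * star U := by
            congr 2
            rw [hD, show ((lam:ℂ) • 1 : Matrix (Fin n) (Fin n) ℂ) = diagonal (fun _ => (lam:ℂ)) by
              ext i j; by_cases hij : i = j <;> simp [Matrix.one_apply, hij],
              Matrix.diagonal_sub]
            congr 1; funext i
            push_cast
            rfl
    rw [hrw]
    have hnn : ∀ i, (0:ℂ) ≤ ((hm.eigenvalues i - lam : ℝ) : ℂ) := by
      intro i
      rw [Complex.zero_le_real]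
      have := minEig_le hm i
      rw [← hlam] at this
      linarith
    have := (Matrix.PosSemidef.diagonal hnn (n := Fin n)).mul_mul_conjTranspose_same U
    rw [← Matrix.star_eq_conjTranspose] at this
    exact this
  exact ⟨⟨p, f, hpoly, herm, psd, k, kpos, htr, hmul, idem, hfix, hshift⟩⟩

end Ground

/-- The ground space of a hermitian matrix: the eigenspace of its smallest eigenvalue. -/
noncomputable def groundSpaceSet {n : ℕ} (a : Matrix (Fin n) (Fin n) ℂ) :
    Set (Fin n → ℂ) :=
  {v | a.mulVec v = (minEig a : ℂ) • v}

section MainHelpers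
open Polynomial
variable {n : ℕ}

private lemma hs_herm {x b : Matrix (Fin n) (Fin n) ℂ} (hx : xᴴ = x) :
    hsInner x b = (Matrix.trace (x * b)).re := by rw [hsInner, hx]

private lemma hs_sub (x y b : Matrix (Fin n) (Fin n) ℂ) :
    hsInner (x - y) b = hsInner x b - hsInner y b := by
  rw [hsInner, hsInner, hsInner, Matrix.conjTranspose_sub, Matrix.sub_mul, Matrix.trace_sub,
    Complex.sub_re]

private lemma hs_add (x y b : Matrix (Fin n) (Fin n) ℂ) :
    hsInner (x + y) b = hsInner x b + hsInner y b := by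
  rw [hsInner, hsInner, hsInner, Matrix.conjTranspose_add, Matrix.add_mul, Matrix.trace_add,
    Complex.add_re]

private lemma hs_rsmul (r : ℝ) (x b : Matrix (Fin n) (Fin n) ℂ) :
    hsInner (((r:ℝ):ℂ) • x) b = r * hsInner x b := by
  rw [hsInner, hsInner, Matrix.conjTranspose_smul, Matrix.smul_mul, Matrix.trace_smul]
  rw [Complex.star_def, Complex.conj_ofReal, smul_eq_mul, Complex.mul_re]
  simp

private lemma grounddata_pm {m : Matrix (Fin n) (Fin n) ℂ} (G : GroundData m) (hm : mᴴ = m) :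
    G.p * m = ((minEig m : ℝ) : ℂ) • G.p := by
  have h := congrArg Matrix.conjTranspose G.hmul
  rw [Matrix.conjTranspose_mul, G.herm, hm, Matrix.conjTranspose_smul, G.herm,
    Complex.star_def, Complex.conj_ofReal] at h
  exact h

private lemma grounddata_value {m : Matrix (Fin n) (Fin n) ℂ} (G : GroundData m) (hm : mᴴ = m) :
    (Matrix.trace ((((G.k)⁻¹ : ℝ) : ℂ) • G.p * m)).re = minEig m := by
  have hk0 : (G.k : ℂ) ≠ 0 := by exact_mod_cast ne_of_gt G.kpos
  rw [Matrix.smul_mul, Matrix.trace_smul, grounddata_pm G hm, Matrix.trace_smul, G.htr]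
  rw [smul_eq_mul, smul_eq_mul]
  rw [show ((G.k⁻¹ : ℝ):ℂ) * (((minEig m :ℝ):ℂ) * (G.k:ℂ)) = ((minEig m:ℝ):ℂ) *
    (((G.k⁻¹:ℝ):ℂ) * (G.k:ℂ)) by ring]
  push_cast
  rw [inv_mul_cancel₀ hk0, mul_one, Complex.ofReal_re]

private lemma state_pairing_ge {m σ : Matrix (Fin n) (Fin n) ℂ} (G : GroundData m)
    (hσ : σ.PosSemidef) (hσtr : σ.trace = 1) : minEig m ≤ (Matrix.trace (σ * m)).re := by
  have h := psd_trace_nonneg hσ G.hshift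
  have hexp : Matrix.trace (σ * (m - ((minEig m:ℝ):ℂ) • 1))
      = Matrix.trace (σ * m) - ((minEig m:ℝ):ℂ) := by
    rw [Matrix.mul_sub, Matrix.trace_sub, Matrix.mul_smul, mul_one, Matrix.trace_smul, hσtr,
      smul_eq_mul, mul_one]
  rw [hexp, Complex.sub_re, Complex.ofReal_re] at h
  linarith

private lemma state_pairing_eq {m σ : Matrix (Fin n) (Fin n) ℂ} (G : GroundData m)
    (hσ : σ.PosSemidef) (hσtr : σ.trace = 1)
    (h : (Matrix.trace (σ * m)).re = minEig m) : σ * m = ((minEig m:ℝ):ℂ) • σ := by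
  have hexp : Matrix.trace (σ * (m - ((minEig m:ℝ):ℂ) • 1))
      = Matrix.trace (σ * m) - ((minEig m:ℝ):ℂ) := by
    rw [Matrix.mul_sub, Matrix.trace_sub, Matrix.mul_smul, mul_one, Matrix.trace_smul, hσtr,
      smul_eq_mul, mul_one]
  have hz : σ * (m - ((minEig m:ℝ):ℂ) • 1) = 0 := by
    apply psd_trace_eq_zero hσ G.hshift
    rw [hexp, Complex.sub_re, Complex.ofReal_re, h, sub_self]
  have : σ * m - ((minEig m:ℝ):ℂ) • σ = 0 := by
    rw [← hz, Matrix.mul_sub, Matrix.mul_smul, mul_one]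
  linear_combination (norm := module) this

end MainHelpers

/-- For hermitian `a ∈ 𝒜`, the normal cone of the state space `C` of `𝒜`
(within the hermitian part of `𝒜`) at the exposed face `F_C(a)` equals
`{b hermitian in 𝒜 | p₀(a) ⪯ p₀(b)}`; in terms of spaces, the condition `p₀(a) ⪯ p₀(b)`
says that the ground space of `a` is contained in the ground space of `b`. -/
theorem stmt4 {n : ℕ} (𝒜 : StarSubalgebra ℂ (Matrix (Fin n) (Fin n) ℂ))
    (a : Matrix (Fin n) (Fin n) ℂ) (ha : a ∈ 𝒜) (haH : aᴴ = a) :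
    {b | b ∈ 𝒜 ∧ bᴴ = b ∧
        ∀ x ∈ riSet (expFace 𝒜 a), ∀ ρ ∈ states 𝒜, 0 ≤ hsInner (ρ - x) b}
      = {b | b ∈ 𝒜 ∧ bᴴ = b ∧ groundSpaceSet a ⊆ groundSpaceSet b} := by
  classical
  rcases Nat.eq_zero_or_pos n with hn0 | hn
  · subst hn0
    ext b
    simp only [Set.mem_setOf_eq]
    constructor
    · rintro ⟨h1, h2, -⟩
      refine ⟨h1, h2, ?_⟩
      intro v _
      show b.mulVec v = _
      exact Subsingleton.elim _ _
    · rintro ⟨h1, h2, -⟩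
      refine ⟨h1, h2, ?_⟩
      intro x _ ρ hρ
      exfalso
      have h3 : ρ.trace = 1 := hρ.2.2
      rw [Matrix.trace_eq_zero_of_isEmpty] at h3
      exact zero_ne_one h3
  · have hA : a.IsHermitian := haH
    obtain ⟨Ga⟩ := mkGroundData hn hA
    have hpA : Ga.p ∈ 𝒜 := by rw [Ga.hpoly]; exact aeval_mem 𝒜 ha Ga.f
    have hk0 : (Ga.k : ℂ) ≠ 0 := by exact_mod_cast ne_of_gt Ga.kpos
    set x₀ : Matrix (Fin n) (Fin n) ℂ := ((Ga.k⁻¹ : ℝ) : ℂ) • Ga.p with hx₀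
    clear_value x₀
    have hx₀A : x₀ ∈ 𝒜 := by rw [hx₀]; exact 𝒜.toSubalgebra.smul_mem hpA _
    have hx₀psd : x₀.PosSemidef := by
      rw [hx₀]; exact psd_smul_real Ga.psd (inv_nonneg.mpr Ga.kpos.le)
    have hx₀herm : x₀ᴴ = x₀ := hx₀psd.1
    have hx₀tr : x₀.trace = 1 := by
      rw [hx₀, Matrix.trace_smul, Ga.htr, smul_eq_mul]
      push_cast
      rw [inv_mul_cancel₀ hk0]
    have hx₀states : x₀ ∈ states 𝒜 := ⟨hx₀A, hx₀psd, hx₀tr⟩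
    have hx₀val : hsInner x₀ a = minEig a := by
      rw [hs_herm hx₀herm, hx₀]
      exact grounddata_value Ga haH
    -- membership in the exposed face
    have hx₀face : x₀ ∈ expFace 𝒜 a := by
      refine ⟨hx₀states, ?_⟩
      intro σ hσ
      rw [hx₀val, hs_herm hσ.2.1.1]
      exact state_pairing_ge Ga hσ.2.1 hσ.2.2
    -- any face element is supported on the ground projection
    have hface : ∀ x ∈ expFace 𝒜 a,
        hsInner x a = minEig a ∧ Ga.p * x = x ∧ x * Ga.p = x := by
      intro x hx
      obtain ⟨⟨hxA, hxpsd, hxtr⟩, hxmin⟩ := hx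
      have hxherm : xᴴ = x := hxpsd.1
      have hle : hsInner x a ≤ minEig a := by
        have := hxmin x₀ hx₀states
        rwa [hx₀val] at this
      have hge : minEig a ≤ hsInner x a := by
        rw [hs_herm hxherm]
        exact state_pairing_ge Ga hxpsd hxtr
      have heq : hsInner x a = minEig a := le_antisymm hle hge
      have hxa : x * a = ((minEig a:ℝ):ℂ) • x := by
        apply state_pairing_eq Ga hxpsd hxtr
        rw [← hs_herm hxherm]; exact heq
      have hax : a * x = ((minEig a:ℝ):ℂ) • x := by
        have h := congrArg Matrix.conjTranspose hxa
        rwa [Matrix.conjTranspose_mul, hxherm, haH, Matrix.conjTranspose_smul, hxherm,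
          Complex.star_def, Complex.conj_ofReal] at h
      have hpx : Ga.p * x = x := mul_fix_columns Ga.hfix hax
      have hxp : x * Ga.p = x := by
        have h := congrArg Matrix.conjTranspose hpx
        rwa [Matrix.conjTranspose_mul, hxherm, Ga.herm] at h
      exact ⟨heq, hpx, hxp⟩
    -- x₀ is in the algebraic relative interior of the face
    have hx₀ri : x₀ ∈ riSet (expFace 𝒜 a) := by
      refine ⟨hx₀face, ?_⟩
      intro y hy
      refine ⟨Ga.k⁻¹, inv_pos.mpr Ga.kpos, ?_⟩
      obtain ⟨hyval, hpy, hyp⟩ := hface y hy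
      obtain ⟨⟨hyA, hypsd, hytr⟩, hymin⟩ := hy
      have hyherm : yᴴ = y := hypsd.1
      have hzrw : x₀ + Ga.k⁻¹ • (x₀ - y) = x₀ + ((Ga.k⁻¹:ℝ):ℂ) • (x₀ - y) := by
        rw [real_smul_mat]
      rw [hzrw]
      set z : Matrix (Fin n) (Fin n) ℂ := x₀ + ((Ga.k⁻¹:ℝ):ℂ) • (x₀ - y) with hz
      clear_value z
      have hzA : z ∈ 𝒜 := by
        rw [hz]
        exact 𝒜.toSubalgebra.add_mem hx₀A
          (𝒜.toSubalgebra.smul_mem (𝒜.toSubalgebra.sub_mem hx₀A hyA) _)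
      have hzherm : zᴴ = z := by
        rw [hz, Matrix.conjTranspose_add, Matrix.conjTranspose_smul, Matrix.conjTranspose_sub,
          hx₀herm, hyherm, Complex.star_def, Complex.conj_ofReal]
      have hztr : z.trace = 1 := by
        rw [hz, Matrix.trace_add, Matrix.trace_smul, Matrix.trace_sub, hx₀tr, hytr, sub_self,
          smul_zero, add_zero]
      have hzpsd : z.PosSemidef := by
        rw [Matrix.posSemidef_iff_dotProduct_mulVec]
        refine ⟨hzherm, ?_⟩
        intro v
        set w : Fin n → ℂ := Ga.p *ᵥ v with hw
        have hQ : star v ⬝ᵥ x₀ *ᵥ v = ((Ga.k⁻¹:ℝ):ℂ) * (star w ⬝ᵥ w) := by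
          rw [hx₀, Matrix.smul_mulVec, dotProduct_smul, smul_eq_mul]
          congr 1
          have := quad_idem Ga.herm v
          rw [Ga.idem] at this
          rw [this, hw]
        have hR : star v ⬝ᵥ y *ᵥ v = star w ⬝ᵥ y *ᵥ w := by
          have hyppy : y = Ga.p * y * Ga.p := by rw [hpy, hyp]
          conv_lhs => rw [hyppy]
          rw [show (Ga.p * y * Ga.p) *ᵥ v = Ga.p *ᵥ (y *ᵥ (Ga.p *ᵥ v)) by
            rw [Matrix.mulVec_mulVec, Matrix.mulVec_mulVec]]
          rw [Matrix.dotProduct_mulVec, Matrix.star_mulVec, Ga.herm, hw]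
        have hS0 : (0:ℝ) ≤ (star w ⬝ᵥ w).re := by
          rw [star_dot_re]
          simp only [Complex.ofReal_re]
          exact Finset.sum_nonneg fun i _ => Complex.normSq_nonneg _
        have hRle : (star w ⬝ᵥ y *ᵥ w).re ≤ (star w ⬝ᵥ w).re := by
          have := quad_le_trace hypsd w
          rw [hytr] at this
          simpa using this
        have hzquad : star v ⬝ᵥ z *ᵥ v
            = star v ⬝ᵥ x₀ *ᵥ v + ((Ga.k⁻¹:ℝ):ℂ) * (star v ⬝ᵥ x₀ *ᵥ v - star v ⬝ᵥ y *ᵥ v) := by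
          rw [hz, Matrix.add_mulVec, Matrix.smul_mulVec, Matrix.sub_mulVec,
            dotProduct_add, dotProduct_smul, dotProduct_sub, smul_eq_mul]
        rw [hzquad, hQ, hR]
        rw [Complex.le_def]
        constructor
        · simp only [Complex.add_re, Complex.mul_re, Complex.sub_re, Complex.ofReal_re,
            Complex.ofReal_im, Complex.zero_re, zero_mul, sub_zero]
          have hkpos : (0:ℝ) < Ga.k⁻¹ := inv_pos.mpr Ga.kpos
          nlinarith [mul_nonneg hkpos.le hS0, mul_nonneg (mul_nonneg hkpos.le hkpos.le) hS0,
            mul_le_mul_of_nonneg_left hRle hkpos.le]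
        · simp only [Complex.add_im, Complex.mul_im, Complex.sub_im, Complex.ofReal_re,
            Complex.ofReal_im, Complex.zero_im, zero_mul, add_zero]
          have hwim : (star w ⬝ᵥ w).im = 0 := by rw [star_dot_re]; simp
          have hyim : (star w ⬝ᵥ y *ᵥ w).im = 0 := herm_quad_real hyherm w
          rw [hwim, hyim]
          ring
      have hzval : hsInner z a = minEig a := by
        rw [hz, hs_add, hs_rsmul, hs_sub, hx₀val, hyval, sub_self, mul_zero, add_zero]
      refine ⟨⟨hzA, hzpsd, hztr⟩, ?_⟩
      intro σ hσ
      rw [hzval, hs_herm hσ.2.1.1]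
      exact state_pairing_ge Ga hσ.2.1 hσ.2.2
    -- now the set equality
    ext b
    simp only [Set.mem_setOf_eq]
    constructor
    · rintro ⟨hbA, hbH, hH⟩
      refine ⟨hbA, hbH, ?_⟩
      have hB : b.IsHermitian := hbH
      obtain ⟨Gb⟩ := mkGroundData hn hB
      have hqA : Gb.p ∈ 𝒜 := by rw [Gb.hpoly]; exact aeval_mem 𝒜 hbA Gb.f
      have hl0 : (Gb.k : ℂ) ≠ 0 := by exact_mod_cast ne_of_gt Gb.kpos
      set ρb : Matrix (Fin n) (Fin n) ℂ := ((Gb.k⁻¹ : ℝ) : ℂ) • Gb.p with hρb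
      clear_value ρb
      have hρbpsd : ρb.PosSemidef := by
        rw [hρb]; exact psd_smul_real Gb.psd (inv_nonneg.mpr Gb.kpos.le)
      have hρbtr : ρb.trace = 1 := by
        rw [hρb, Matrix.trace_smul, Gb.htr, smul_eq_mul]
        push_cast
        rw [inv_mul_cancel₀ hl0]
      have hρbA : ρb ∈ 𝒜 := by rw [hρb]; exact 𝒜.toSubalgebra.smul_mem hqA _
      have hρbstates : ρb ∈ states 𝒜 := ⟨hρbA, hρbpsd, hρbtr⟩
      have hHH := hH x₀ hx₀ri ρb hρbstates
      rw [hs_sub] at hHH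
      have hval : hsInner ρb b = minEig b := by
        rw [hs_herm hρbpsd.1, hρb]
        exact grounddata_value Gb hbH
      have hge : minEig b ≤ hsInner x₀ b := by
        rw [hs_herm hx₀herm]
        exact state_pairing_ge Gb hx₀psd hx₀tr
      have heq : (Matrix.trace (x₀ * b)).re = minEig b := by
        rw [← hs_herm hx₀herm]
        rw [hval] at hHH
        linarith
      have hx₀b : x₀ * b = ((minEig b:ℝ):ℂ) • x₀ := state_pairing_eq Gb hx₀psd hx₀tr heq
      have hpb : Ga.p * b = ((minEig b:ℝ):ℂ) • Ga.p := by
        have hpk : Ga.p = (Ga.k : ℂ) • x₀ := by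
          rw [hx₀, smul_smul]
          push_cast
          rw [mul_inv_cancel₀ hk0, one_smul]
        rw [hpk, Matrix.smul_mul, hx₀b, smul_comm]
      have hbp : b * Ga.p = ((minEig b:ℝ):ℂ) • Ga.p := by
        have h := congrArg Matrix.conjTranspose hpb
        rwa [Matrix.conjTranspose_mul, hbH, Ga.herm, Matrix.conjTranspose_smul, Ga.herm,
          Complex.star_def, Complex.conj_ofReal] at h
      intro v hv
      have hv' : a.mulVec v = ((minEig a : ℝ):ℂ) • v := hv
      have hfixv : Ga.p *ᵥ v = v := Ga.hfix v hv'
      show b.mulVec v = ((minEig b : ℝ):ℂ) • v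
      calc b *ᵥ v = b *ᵥ (Ga.p *ᵥ v) := by rw [hfixv]
        _ = (b * Ga.p) *ᵥ v := by rw [Matrix.mulVec_mulVec]
        _ = ((minEig b:ℝ):ℂ) • (Ga.p *ᵥ v) := by rw [hbp, Matrix.smul_mulVec]
        _ = ((minEig b:ℝ):ℂ) • v := by rw [hfixv]
    · rintro ⟨hbA, hbH, hsub⟩
      refine ⟨hbA, hbH, ?_⟩
      have hB : b.IsHermitian := hbH
      obtain ⟨Gb⟩ := mkGroundData hn hB
      have hbp : b * Ga.p = ((minEig b:ℝ):ℂ) • Ga.p := by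
        apply ext_mulVec
        intro v
        have h1 : a *ᵥ (Ga.p *ᵥ v) = ((minEig a:ℝ):ℂ) • (Ga.p *ᵥ v) := by
          rw [Matrix.mulVec_mulVec, Ga.hmul, Matrix.smul_mulVec]
        have h2 : Ga.p *ᵥ v ∈ groundSpaceSet b := hsub h1
        have h3 : b *ᵥ (Ga.p *ᵥ v) = ((minEig b:ℝ):ℂ) • (Ga.p *ᵥ v) := h2
        rw [Matrix.smul_mulVec, ← Matrix.mulVec_mulVec, h3]
      have hpb : Ga.p * b = ((minEig b:ℝ):ℂ) • Ga.p := by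
        have h := congrArg Matrix.conjTranspose hbp
        rwa [Matrix.conjTranspose_mul, hbH, Ga.herm, Matrix.conjTranspose_smul, Ga.herm,
          Complex.star_def, Complex.conj_ofReal] at h
      intro x hxri ρ hρ
      obtain ⟨hxval, hpx, hxp⟩ := hface x hxri.1
      obtain ⟨⟨hxA, hxpsd, hxtr⟩, -⟩ := hxri.1
      have hxherm : xᴴ = x := hxpsd.1
      have hxb : hsInner x b = minEig b := by
        rw [hs_herm hxherm]
        have : x * b = ((minEig b:ℝ):ℂ) • x := by
          calc x * b = (x * Ga.p) * b := by rw [hxp]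
            _ = x * (Ga.p * b) := by rw [Matrix.mul_assoc]
            _ = ((minEig b:ℝ):ℂ) • (x * Ga.p) := by rw [hpb, Matrix.mul_smul]
            _ = ((minEig b:ℝ):ℂ) • x := by rw [hxp]
        rw [this, Matrix.trace_smul, hxtr, smul_eq_mul, mul_one, Complex.ofReal_re]
      have hρge : minEig b ≤ hsInner ρ b := by
        rw [hs_herm hρ.2.1.1]
        exact state_pairing_ge Gb hρ.2.1 hρ.2.2
      rw [hs_sub, hxb]
      linarith
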